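/- Let 0 < γ ≤ 2, let ρ ∈ (−1,1) with ρ + γ ≤ 1, and let n ≥ 3 be an integer; set ñ = n − 3. Then ∫_{ρ+γ}^{1} (1−ρ²)^{n/2} (1−x²)^{(n−3)/2} (1−ρx)^{−n+1/2} dx ≤ (1−ρ²)^{3/2}/(1−|ρ|)^{5/2} · 2 · ((4−γ²)/(4+γ²))^{ñ}. -/

import Mathlib

set_option autoImplicit false
set_option maxHeartbeats 1600000

/-- For `0 < γ ≤ 2`, `ρ ∈ (-1,1)` with `ρ + γ ≤ 1`, and an
integer `n ≥ 3` (with `ñ = n - 3`),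
`∫_{ρ+γ}^{1} (1-ρ²)^{n/2} (1-x²)^{(n-3)/2} (1-ρx)^{-n+1/2} dx
  ≤ (1-ρ²)^{3/2}/(1-|ρ|)^{5/2} · 2 · ((4-γ²)/(4+γ²))^{ñ}`. -/
theorem stmt_3 (γ ρ : ℝ) (hγ0 : 0 < γ) (hγ2 : γ ≤ 2)
    (hρ1 : -1 < ρ) (hρ2 : ρ < 1) (hsum : ρ + γ ≤ 1) (n : ℕ) (hn : 3 ≤ n) :
    ∫ x in (ρ + γ)..1,
        (1 - ρ ^ 2) ^ ((n : ℝ) / 2) * (1 - x ^ 2) ^ (((n : ℝ) - 3) / 2)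
          * (1 - ρ * x) ^ (-(n : ℝ) + 1 / 2)
      ≤ (1 - ρ ^ 2) ^ ((3 : ℝ) / 2) / (1 - |ρ|) ^ ((5 : ℝ) / 2) * 2
          * ((4 - γ ^ 2) / (4 + γ ^ 2)) ^ (n - 3) := by
  have hρabs : |ρ| < 1 := abs_lt.mpr ⟨hρ1, hρ2⟩
  have hρa : 0 < 1 - |ρ| := by linarith
  have hρsq : 0 < 1 - ρ ^ 2 := by nlinarith [abs_nonneg ρ, sq_abs ρ]
  have hγd : (0:ℝ) < 4 + γ ^ 2 := by positivity
  have hq0 : 0 ≤ (4 - γ ^ 2) / (4 + γ ^ 2) := div_nonneg (by nlinarith) hγd.le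
  set q : ℝ := (4 - γ ^ 2) / (4 + γ ^ 2) with hq
  set m : ℝ := (n : ℝ) - 3 with hm
  have hm0 : 0 ≤ m := by
    have : (3:ℝ) ≤ (n:ℝ) := by exact_mod_cast hn
    simp [hm]; linarith
  have hmn : m = ((n - 3 : ℕ) : ℝ) := by
    rw [hm, Nat.cast_sub hn]; norm_num
  set C : ℝ := (1 - ρ ^ 2) ^ ((3:ℝ)/2) * (1 - |ρ|) ^ (-(5:ℝ)/2) * q ^ (n - 3) with hC
  have hC0 : 0 ≤ C := by positivity
  have key : ∀ x ∈ Set.uIoc (ρ + γ) 1,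
      ‖(1 - ρ ^ 2) ^ ((n : ℝ) / 2) * (1 - x ^ 2) ^ (((n : ℝ) - 3) / 2)
          * (1 - ρ * x) ^ (-(n : ℝ) + 1 / 2)‖ ≤ C := by
    intro x hx
    rw [Set.uIoc_of_le hsum] at hx
    obtain ⟨hx1, hx2⟩ := hx
    have hxlb : -1 < x := by linarith
    have hx2' : 0 ≤ 1 - x ^ 2 := by nlinarith
    have hcx : 0 < 1 - ρ * x := by nlinarith [mul_pos (by linarith : (0:ℝ) < 1 - ρ) (by linarith : (0:ℝ) < 1 + x), mul_nonneg (by linarith : (0:ℝ) ≤ 1 + ρ) (by linarith : (0:ℝ) ≤ 1 - x)]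
    have hcxa : 1 - |ρ| ≤ 1 - ρ * x := by
      have : ρ * x ≤ |ρ| := by
        calc ρ * x ≤ |ρ * x| := le_abs_self _
          _ = |ρ| * |x| := abs_mul ρ x
          _ ≤ |ρ| * 1 := by
              gcongr
              exact abs_le.mpr ⟨hxlb.le, hx2⟩
          _ = |ρ| := mul_one _
      linarith
    -- split the integrand
    have e1 : (1 - ρ ^ 2) ^ ((n : ℝ) / 2)
        = (1 - ρ ^ 2) ^ (m / 2) * (1 - ρ ^ 2) ^ ((3:ℝ)/2) := by
      rw [← Real.rpow_add hρsq, hm]; ring_nf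
    have e2 : (1 - ρ * x) ^ (-(n : ℝ) + 1 / 2)
        = (1 - ρ * x) ^ (-m) * (1 - ρ * x) ^ (-(5:ℝ)/2) := by
      rw [← Real.rpow_add hcx, hm]; ring_nf
    -- key algebraic inequality
    have hB0 : 0 ≤ (1 - ρ ^ 2) * (1 - x ^ 2) / (1 - ρ * x) ^ 2 :=
      div_nonneg (mul_nonneg hρsq.le hx2') (sq_nonneg _)
    have hBq : (1 - ρ ^ 2) * (1 - x ^ 2) / (1 - ρ * x) ^ 2 ≤ q ^ 2 := by
      rw [div_le_iff₀ (by positivity)]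
      rw [hq, div_pow, div_mul_eq_mul_div, le_div_iff₀ (by positivity)]
      have hco : (0:ℝ) ≤ 4 + γ ^ 2 + 4 * γ * ρ := by
        have h4 : -(4 * γ) ≤ 4 * γ * ρ := by nlinarith
        nlinarith [sq_nonneg (γ - 2)]
      have hA : (0:ℝ) ≤ (x - (ρ + γ)) * (4 + γ ^ 2 + 4 * γ * ρ) :=
        mul_nonneg (by linarith) hco
      have hB : (0:ℝ) ≤ γ * (γ + 2 * ρ) ^ 2 := by positivity
      have h1 : 4 * γ * (1 - ρ * x) ≤ (x - ρ) * (4 + γ ^ 2) := by nlinarith [hA, hB]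
      have hl : 0 ≤ 4 * γ * (1 - ρ * x) := by positivity
      have h2 : (4 * γ * (1 - ρ * x))^2 ≤ ((x - ρ) * (4 + γ ^ 2))^2 :=
        pow_le_pow_left₀ hl h1 2
      nlinarith [h2]
    -- combine
    have epos : (0:ℝ) ≤ m / 2 := by linarith
    have estep : (1 - ρ ^ 2) ^ (m / 2) * (1 - x ^ 2) ^ (m / 2) * (1 - ρ * x) ^ (-m)
        = ((1 - ρ ^ 2) * (1 - x ^ 2) / (1 - ρ * x) ^ 2) ^ (m / 2) := by
      rw [Real.div_rpow (mul_nonneg hρsq.le hx2') (sq_nonneg _),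
        Real.mul_rpow hρsq.le hx2', ← Real.rpow_natCast (1 - ρ * x) 2,
        ← Real.rpow_mul hcx.le, Real.rpow_neg hcx.le]
      norm_num
      ring_nf
    have hbnd1 : ((1 - ρ ^ 2) * (1 - x ^ 2) / (1 - ρ * x) ^ 2) ^ (m / 2) ≤ q ^ (n - 3) := by
      calc ((1 - ρ ^ 2) * (1 - x ^ 2) / (1 - ρ * x) ^ 2) ^ (m / 2)
          ≤ (q ^ 2) ^ (m / 2) := Real.rpow_le_rpow hB0 hBq epos
        _ = q ^ m := by
            rw [← Real.rpow_natCast q 2, ← Real.rpow_mul hq0]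
            congr 1
            ring
        _ = q ^ (n - 3) := by rw [hmn, Real.rpow_natCast]
    have hbnd2 : (1 - ρ * x) ^ (-(5:ℝ)/2) ≤ (1 - |ρ|) ^ (-(5:ℝ)/2) :=
      Real.rpow_le_rpow_of_nonpos hρa hcxa (by norm_num)
    have hfnn : (0:ℝ) ≤ (1 - ρ ^ 2) ^ ((n : ℝ) / 2) * (1 - x ^ 2) ^ (((n : ℝ) - 3) / 2)
          * (1 - ρ * x) ^ (-(n : ℝ) + 1 / 2) := by positivity
    rw [Real.norm_eq_abs, abs_of_nonneg hfnn]
    calc (1 - ρ ^ 2) ^ ((n : ℝ) / 2) * (1 - x ^ 2) ^ (((n : ℝ) - 3) / 2)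
          * (1 - ρ * x) ^ (-(n : ℝ) + 1 / 2)
        = ((1 - ρ ^ 2) * (1 - x ^ 2) / (1 - ρ * x) ^ 2) ^ (m / 2)
            * ((1 - ρ ^ 2) ^ ((3:ℝ)/2) * (1 - ρ * x) ^ (-(5:ℝ)/2)) := by
          rw [e1, e2, ← estep]; rw [hm]; ring
      _ ≤ q ^ (n - 3) * ((1 - ρ ^ 2) ^ ((3:ℝ)/2) * (1 - |ρ|) ^ (-(5:ℝ)/2)) := by
          apply mul_le_mul hbnd1 _ (by positivity) (by positivity)
          exact mul_le_mul_of_nonneg_left hbnd2 (by positivity)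
      _ = C := by rw [hC]; ring
  have hint := intervalIntegral.norm_integral_le_of_norm_le_const key
  have habs : |1 - (ρ + γ)| ≤ 2 := by
    rw [abs_of_nonneg (by linarith)]; linarith
  calc ∫ x in (ρ + γ)..1,
        (1 - ρ ^ 2) ^ ((n : ℝ) / 2) * (1 - x ^ 2) ^ (((n : ℝ) - 3) / 2)
          * (1 - ρ * x) ^ (-(n : ℝ) + 1 / 2)
      ≤ ‖∫ x in (ρ + γ)..1,
        (1 - ρ ^ 2) ^ ((n : ℝ) / 2) * (1 - x ^ 2) ^ (((n : ℝ) - 3) / 2)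
          * (1 - ρ * x) ^ (-(n : ℝ) + 1 / 2)‖ := le_abs_self _
    _ ≤ C * |1 - (ρ + γ)| := hint
    _ ≤ C * 2 := by
        apply mul_le_mul_of_nonneg_left habs hC0
    _ = (1 - ρ ^ 2) ^ ((3 : ℝ) / 2) / (1 - |ρ|) ^ ((5 : ℝ) / 2) * 2 * q ^ (n - 3) := by
        have hinv : (1 - |ρ|) ^ (-(5:ℝ)/2) = ((1 - |ρ|) ^ ((5:ℝ)/2))⁻¹ := by
          rw [show (-(5:ℝ)/2) = -((5:ℝ)/2) by norm_num, Real.rpow_neg hρa.le]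
        rw [hC, hinv, div_eq_mul_inv]
        ring
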